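/- For every ε ∈ (0,1) there exists N = N(ε) such that for all n ≥ N the following holds. Let δ = ε/3, and let S_1, S_2, ..., S_m be any partition of [n] into m = ⌈n^{1−δ}⌉ blocks, each of size at most ⌈n^{δ}⌉. Then for every comparator circuit C on n variables with at most n^{1.5−ε} wires, there exists a block S_i such that the number of distinct functions in {C|ρ : ρ ∈ {0,1}^{[n]∖S_i}} is at most 2^{n^{1−ε/2}}. -/

import Mathlib

/-- A comparator circuit on `n` Boolean variables with `ℓ` wires.
Each wire is labelled by a literal: a pair `(i, neg)` meaning the variable `x_i`
if `neg = false` and its negation `¬x_i` if `neg = true`.  Each gate is an ordered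
pair of distinct wires `(w, w')`: applying it, `w` receives the conjunction of the
two held values and `w'` receives their disjunction.  A designated output wire
carries the result of the computation. -/
structure CompCircuit (n ℓ : ℕ) where
  label : Fin ℓ → Fin n × Bool
  gates : List (Fin ℓ × Fin ℓ)
  distinct : ∀ g ∈ gates, g.1 ≠ g.2
  out : Fin ℓ

namespace CompCircuit

variable {n ℓ : ℕ}

/-- Value of the literal `(i, neg)` on input `x`. -/
def litVal (x : Fin n → Bool) (p : Fin n × Bool) : Bool :=
  if p.2 then !(x p.1) else x p.1

/-- Applying a comparator gate to the current wire values. -/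
def applyGate (g : Fin ℓ × Fin ℓ) (v : Fin ℓ → Bool) : Fin ℓ → Bool :=
  fun w => if w = g.1 then v g.1 && v g.2 else if w = g.2 then v g.1 || v g.2 else v w

/-- Initial wire values on input `x`: each wire holds the value of its literal. -/
def init (C : CompCircuit n ℓ) (x : Fin n → Bool) : Fin ℓ → Bool :=
  fun w => litVal x (C.label w)

/-- Wire values after all the gates have been applied in order. -/
def run (C : CompCircuit n ℓ) (x : Fin n → Bool) : Fin ℓ → Bool :=
  C.gates.foldl (fun v g => applyGate g v) (C.init x)

/-- The output of the circuit: the final value of the output wire. -/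
def eval (C : CompCircuit n ℓ) (x : Fin n → Bool) : Bool :=
  C.run x C.out

/-- Wire values after the first `t` gates have been applied (i.e. just before gate `t`). -/
def stateAfter (C : CompCircuit n ℓ) (x : Fin n → Bool) (t : ℕ) : Fin ℓ → Bool :=
  (C.gates.take t).foldl (fun v g => applyGate g v) (C.init x)

/-- The pair `(u_g(x), v_g(x))` of in-values of gate number `i` on input `x`. -/
def gateIn (C : CompCircuit n ℓ) (x : Fin n → Bool) (i : Fin C.gates.length) : Bool × Bool :=
  (C.stateAfter x i (C.gates.get i).1, C.stateAfter x i (C.gates.get i).2)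

/-- Gate `i` is TYPE-1 useless: its in-values never form the pair `(1,0)`,
i.e. they always lie in `{(0,1),(0,0),(1,1)}`. -/
def Type1UselessAt (C : CompCircuit n ℓ) (i : Fin C.gates.length) : Prop :=
  ∀ x : Fin n → Bool, C.gateIn x i ≠ (true, false)

/-- Gate `i` is TYPE-2 useless: its in-values never form the pair `(0,1)`,
i.e. they always lie in `{(1,0),(0,0),(1,1)}`. -/
def Type2UselessAt (C : CompCircuit n ℓ) (i : Fin C.gates.length) : Prop :=
  ∀ x : Fin n → Bool, C.gateIn x i ≠ (false, true)

/-- Gate `i` is useless if it is TYPE-1 or TYPE-2 useless. -/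
def UselessAt (C : CompCircuit n ℓ) (i : Fin C.gates.length) : Prop :=
  C.Type1UselessAt i ∨ C.Type2UselessAt i

end CompCircuit


namespace CCaux

variable {k : ℕ}

abbrev MM (k : ℕ) := (Fin k → Bool) → Bool

def mle (f g : MM k) : Prop := ∀ y, f y = true → g y = true

def mand (f g : MM k) : MM k := fun y => f y && g y

def mor (f g : MM k) : MM k := fun y => f y || g y

lemma mle_refl (f : MM k) : mle f f := fun _ h => h

lemma mle_mand_left {f u v : MM k} (h : mle u f) : mle (mand u v) f := by
  intro y hy
  exact h y (Bool.and_eq_true_iff.mp hy).1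

lemma mle_mand_right {f u v : MM k} (h : mle v f) : mle (mand u v) f := by
  intro y hy
  exact h y (Bool.and_eq_true_iff.mp hy).2

lemma mle_mand_of_both {f u v : MM k} (h1 : mle f u) (h2 : mle f v) : mle f (mand u v) := by
  intro y hy
  simp [mand, h1 y hy, h2 y hy]

lemma mor_mle_of_both {f u v : MM k} (h1 : mle u f) (h2 : mle v f) : mle (mor u v) f := by
  intro y hy
  rcases Bool.or_eq_true_iff.mp hy with h | h
  · exact h1 y h
  · exact h2 y h

lemma mle_mor_left {f u v : MM k} (h : mle f u) : mle f (mor u v) := by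
  intro y hy
  simp [mor, h y hy]

lemma mle_mor_right {f u v : MM k} (h : mle f v) : mle f (mor u v) := by
  intro y hy
  simp [mor, h y hy]

lemma mle_mand_mor (u v : MM k) : mle (mand u v) (mor u v) := by
  intro y hy
  rcases Bool.and_eq_true_iff.mp hy with ⟨h1, _⟩
  simp [mor, h1]

def tokStep (st : Fin k → MM k) (g : Fin k × Fin k) : Fin k → MM k :=
  fun t => if t = g.1 then mand (st g.1) (st g.2)
    else if t = g.2 then mor (st g.1) (st g.2) else st t

def tokRun (st : Fin k → MM k) (L : List (Fin k × Fin k)) : Fin k → MM k :=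
  L.foldl tokStep st

@[simp] lemma tokRun_nil (st : Fin k → MM k) : tokRun st [] = st := rfl

lemma tokRun_append (st : Fin k → MM k) (L M : List (Fin k × Fin k)) :
    tokRun st (L ++ M) = tokRun (tokRun st L) M := by
  simp [tokRun, List.foldl_append]

noncomputable def phi (st : Fin k → MM k) : ℕ :=
  {p : Fin k × Fin k | mle (st p.1) (st p.2)}.ncard

lemma phi_le (st : Fin k → MM k) : phi st ≤ k * k := by
  have h := Set.ncard_le_ncard (Set.subset_univ {p : Fin k × Fin k | mle (st p.1) (st p.2)})
    Set.finite_univ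
  simpa [phi, Set.ncard_univ] using h

/-- Key potential lemma: a comparator gate applied to two incomparable tokens strictly
increases the number of comparable (ordered) pairs. -/
lemma phi_lt_tokStep (st : Fin k → MM k) (a b : Fin k) (hab : a ≠ b)
    (h1 : ¬ mle (st a) (st b)) (h2 : ¬ mle (st b) (st a)) :
    phi st + 1 ≤ phi (tokStep st (a, b)) := by
  classical
  set u := st a with hu
  set v := st b with hv
  set st' := tokStep st (a, b) with hst'
  have hst'a : st' a = mand u v := by simp [hst', tokStep]; rfl
  have hst'b : st' b = mor u v := by simp [hst', tokStep, hab.symm, Ne.symm hab]; rfl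
  have hst'o : ∀ w, w ≠ a → w ≠ b → st' w = st w := by
    intro w hwa hwb; simp [hst', tokStep, hwa, hwb]
  set A : Set (Fin k × Fin k) := {p | mle (st p.1) (st p.2)} with hA
  set B : Set (Fin k × Fin k) := {p | mle (st' p.1) (st' p.2)} with hB
  set F : Fin k × Fin k → Fin k × Fin k := fun p =>
    if p.1 = a ∨ p.1 = b then
      (if p.2 = a ∨ p.2 = b then p
       else (if mle u (st p.2) ∧ mle v (st p.2) then p else (a, p.2)))
    else
      (if p.2 = a ∨ p.2 = b then
        (if mle (st p.1) u ∧ mle (st p.1) v then p else (p.1, b))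
       else p) with hF
  -- helper: value of st' at p.1 when p.1 ∈ {a,b}
  have himg : ∀ p ∈ A, F p ∈ B := by
    rintro ⟨x, y⟩ hp
    simp only [hA, Set.mem_setOf_eq] at hp
    by_cases hx : x = a ∨ x = b
    · by_cases hy : y = a ∨ y = b
      · -- both in {a,b}
        have : F (x, y) = (x, y) := by simp [hF, hx, hy]
        rw [this]
        simp only [hB, Set.mem_setOf_eq]
        rcases hx with rfl | rfl <;> rcases hy with rfl | rfl
        · exact mle_refl _
        · rw [hst'a, hst'b]; exact mle_mand_mor u v
        · exact absurd hp h2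
        · exact mle_refl _
      · push_neg at hy
        have hsty : st' y = st y := hst'o y hy.1 hy.2
        by_cases hc : mle u (st y) ∧ mle v (st y)
        · have : F (x, y) = (x, y) := by simp [hF, hx, hy, hc]
          rw [this]
          simp only [hB, Set.mem_setOf_eq, hsty]
          rcases hx with rfl | rfl
          · rw [hst'a]; exact mle_mand_left hc.1
          · rw [hst'b]; exact mor_mle_of_both hc.1 hc.2
        · have : F (x, y) = (a, y) := by
            simp only [hF]
            rw [if_pos hx, if_neg (by push_neg; exact hy), if_neg hc]
          rw [this]
          simp only [hB, Set.mem_setOf_eq, hsty, hst'a]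
          rcases hx with rfl | rfl
          · exact mle_mand_left hp
          · exact mle_mand_right hp
    · push_neg at hx
      have hstx : st' x = st x := hst'o x hx.1 hx.2
      by_cases hy : y = a ∨ y = b
      · by_cases hc : mle (st x) u ∧ mle (st x) v
        · have : F (x, y) = (x, y) := by
            simp only [hF]
            rw [if_neg (by push_neg; exact hx), if_pos hy, if_pos hc]
          rw [this]
          simp only [hB, Set.mem_setOf_eq, hstx]
          rcases hy with rfl | rfl
          · rw [hst'a]; exact mle_mand_of_both hc.1 hc.2
          · rw [hst'b]; exact mle_mor_left hc.1
        · have : F (x, y) = (x, b) := by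
            simp only [hF]
            rw [if_neg (by push_neg; exact hx), if_pos hy, if_neg hc]
          rw [this]
          simp only [hB, Set.mem_setOf_eq, hstx, hst'b]
          rcases hy with rfl | rfl
          · exact mle_mor_left hp
          · exact mle_mor_right hp
      · have : F (x, y) = (x, y) := by
          simp only [hF]
          rw [if_neg (by push_neg; exact hx), if_neg hy]
        rw [this]
        simp only [hB, Set.mem_setOf_eq, hstx, hst'o y (by push_neg at hy; exact hy.1) (by push_neg at hy; exact hy.2)]
        exact hp
  have hBothF : ∀ x y : Fin k, (x = a ∨ x = b) → (y = a ∨ y = b) → F (x, y) = (x, y) := by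
    intro x y hx hy; simp [hF, hx, hy]
  have hOutF : ∀ x y : Fin k, ¬(x = a ∨ x = b) → ¬(y = a ∨ y = b) → F (x, y) = (x, y) := by
    intro x y hx hy; simp only [hF]; rw [if_neg hx, if_neg hy]
  have hLF : ∀ x y : Fin k, (x = a ∨ x = b) → ¬(y = a ∨ y = b) →
      (F (x, y)).2 = y ∧ ((F (x, y)).1 = a ∨ (F (x, y)).1 = b) := by
    intro x y hx hy
    simp only [hF]
    rw [if_pos hx, if_neg hy]
    by_cases hc : mle u (st y) ∧ mle v (st y)
    · rw [if_pos hc]; exact ⟨rfl, hx⟩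
    · rw [if_neg hc]; exact ⟨rfl, Or.inl rfl⟩
  have hRF : ∀ x y : Fin k, ¬(x = a ∨ x = b) → (y = a ∨ y = b) →
      (F (x, y)).1 = x ∧ ((F (x, y)).2 = a ∨ (F (x, y)).2 = b) := by
    intro x y hx hy
    simp only [hF]
    rw [if_neg hx, if_pos hy]
    by_cases hc : mle (st x) u ∧ mle (st x) v
    · rw [if_pos hc]; exact ⟨rfl, hy⟩
    · rw [if_neg hc]; exact ⟨rfl, Or.inr rfl⟩
  have hinj : Set.InjOn F A := by
    rintro ⟨x, y⟩ hp ⟨x', y'⟩ hq hFeq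
    simp only [hA, Set.mem_setOf_eq] at hp hq
    by_cases hx : x = a ∨ x = b <;> by_cases hy : y = a ∨ y = b <;>
      by_cases hx' : x' = a ∨ x' = b <;> by_cases hy' : y' = a ∨ y' = b
    · rw [hBothF x y hx hy, hBothF x' y' hx' hy'] at hFeq; exact hFeq
    · -- p both, q left: second coords clash
      exfalso
      have h2q := (hLF x' y' hx' hy').1
      rw [← hFeq, hBothF x y hx hy] at h2q
      exact hy' (h2q ▸ hy)
    · -- p both, q right: first coords clash
      exfalso
      have h1q := (hRF x' y' hx' hy').1
      rw [← hFeq, hBothF x y hx hy] at h1q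
      exact hx' (h1q ▸ hx)
    · -- p both, q out
      exfalso
      rw [hBothF x y hx hy, hOutF x' y' hx' hy'] at hFeq
      have : x = x' := congrArg Prod.fst hFeq
      exact hx' (this ▸ hx)
    · -- p left, q both
      exfalso
      have h2p := (hLF x y hx hy).1
      rw [hFeq, hBothF x' y' hx' hy'] at h2p
      exact hy (h2p ▸ hy')
    · -- p left, q left
      have hyy : y = y' := by
        have e1 := (hLF x y hx hy).1
        have e2 := (hLF x' y' hx' hy').1
        rw [hFeq] at e1; rw [e2] at e1; exact e1.symm
      by_cases hc : mle u (st y) ∧ mle v (st y)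
      · have e1 : F (x, y) = (x, y) := by
          simp only [hF]; rw [if_pos hx, if_neg hy, if_pos hc]
        have e2 : F (x', y') = (x', y') := by
          simp only [hF]; rw [if_pos hx', if_neg hy', if_pos (by rw [← hyy]; exact hc)]
        rw [e1, e2] at hFeq; exact hFeq
      · rw [← hyy] at hq
        rcases hx with rfl | rfl <;> rcases hx' with rfl | rfl
        · rw [hyy]
        · exact absurd ⟨hp, hq⟩ hc
        · exact absurd ⟨hq, hp⟩ hc
        · rw [hyy]
    · -- p left, q right
      exfalso
      have h2p := (hLF x y hx hy).1
      have h2q := (hRF x' y' hx' hy').2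
      rw [hFeq] at h2p
      rcases h2q with h | h <;> rw [h2p] at h <;> [exact hy (Or.inl h); exact hy (Or.inr h)]
    · -- p left, q out
      exfalso
      have h1p := (hLF x y hx hy).2
      rw [hFeq, hOutF x' y' hx' hy'] at h1p
      exact hx' h1p
    · -- p right, q both
      exfalso
      have h1p := (hRF x y hx hy).1
      rw [hFeq, hBothF x' y' hx' hy'] at h1p
      exact hx (h1p ▸ hx')
    · -- p right, q left
      exfalso
      have h2p := (hRF x y hx hy).2
      have h2q := (hLF x' y' hx' hy').1
      rw [hFeq] at h2p
      rcases h2p with h | h <;> rw [h2q] at h <;> [exact hy' (Or.inl h); exact hy' (Or.inr h)]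
    · -- p right, q right
      have hxx : x = x' := by
        have e1 := (hRF x y hx hy).1
        have e2 := (hRF x' y' hx' hy').1
        rw [hFeq] at e1; rw [e2] at e1; exact e1.symm
      by_cases hc : mle (st x) u ∧ mle (st x) v
      · have e1 : F (x, y) = (x, y) := by
          simp only [hF]; rw [if_neg hx, if_pos hy, if_pos hc]
        have e2 : F (x', y') = (x', y') := by
          simp only [hF]; rw [if_neg hx', if_pos hy', if_pos (by rw [← hxx]; exact hc)]
        rw [e1, e2] at hFeq; exact hFeq
      · rw [← hxx] at hq
        rcases hy with rfl | rfl <;> rcases hy' with rfl | rfl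
        · rw [hxx]
        · exact absurd ⟨hp, hq⟩ hc
        · exact absurd ⟨hq, hp⟩ hc
        · rw [hxx]
    · -- p right, q out
      exfalso
      have h2p := (hRF x y hx hy).2
      rw [hFeq, hOutF x' y' hx' hy'] at h2p
      exact hy' h2p
    · -- p out, q both
      exfalso
      rw [hOutF x y hx hy, hBothF x' y' hx' hy'] at hFeq
      have : x = x' := congrArg Prod.fst hFeq
      exact hx (this ▸ hx')
    · -- p out, q left
      exfalso
      have h1q := (hLF x' y' hx' hy').2
      rw [← hFeq, hOutF x y hx hy] at h1q
      exact hx h1q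
    · -- p out, q right
      exfalso
      have h2q := (hRF x' y' hx' hy').2
      rw [← hFeq, hOutF x y hx hy] at h2q
      exact hy h2q
    · rw [hOutF x y hx hy, hOutF x' y' hx' hy'] at hFeq; exact hFeq
  have habB : (a, b) ∈ B := by
    simp only [hB, Set.mem_setOf_eq, hst'a, hst'b]
    exact mle_mand_mor u v
  have habnotimg : (a, b) ∉ F '' A := by
    rintro ⟨⟨x, y⟩, hpA, hpeq⟩
    simp only [hA, Set.mem_setOf_eq] at hpA
    by_cases hx : x = a ∨ x = b <;> by_cases hy : y = a ∨ y = b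
    · rw [hBothF x y hx hy] at hpeq
      have e1 : x = a := congrArg Prod.fst hpeq
      have e2 : y = b := congrArg Prod.snd hpeq
      subst e1; subst e2
      exact h1 hpA
    · have := (hLF x y hx hy).1
      rw [hpeq] at this
      exact hy (Or.inr this.symm)
    · have := (hRF x y hx hy).1
      rw [hpeq] at this
      exact hx (Or.inl this.symm)
    · rw [hOutF x y hx hy] at hpeq
      have e1 : x = a := congrArg Prod.fst hpeq
      exact hx (Or.inl e1)
  have hsub : insert (a, b) (F '' A) ⊆ B := by
    intro r hr
    rcases Set.mem_insert_iff.mp hr with rfl | ⟨p, hpA, rfl⟩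
    · exact habB
    · exact himg p hpA
  calc phi st + 1 = (F '' A).ncard + 1 := by rw [Set.ncard_image_of_injOn hinj]; rfl
    _ = (insert (a, b) (F '' A)).ncard := (Set.ncard_insert_of_notMem habnotimg (Set.toFinite _)).symm
    _ ≤ B.ncard := Set.ncard_le_ncard hsub (Set.toFinite _)

end CCaux

namespace CCaux

variable {k : ℕ}

lemma mand_eq_of_mle {u v : MM k} (h : mle u v) : mand u v = u := by
  funext y
  cases hy : u y with
  | false => simp [mand, hy]
  | true => simp [mand, hy, h y hy]

lemma mor_eq_of_mle {u v : MM k} (h : mle u v) : mor u v = v := by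
  funext y
  cases hy : u y with
  | false => simp [mor, hy]
  | true => simp [mor, hy, h y hy]

lemma reduceOption_replicate_none {α : Type*} (m : ℕ) :
    (List.replicate m (none : Option α)).reduceOption = [] := by
  induction m with
  | zero => rfl
  | succ m ih => simp [List.replicate_succ, ih]

lemma reduceOption_ofFn_getElem? {α : Type*} :
    ∀ (m : ℕ) (L : List α), L.length ≤ m →
      (List.ofFn (fun j : Fin m => L[(j : ℕ)]?)).reduceOption = L := by
  intro m
  induction m with
  | zero =>
    intro L hL
    have : L = [] := List.eq_nil_of_length_eq_zero (Nat.le_zero.mp hL)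
    subst this
    rfl
  | succ m ih =>
    intro L hL
    cases L with
    | nil =>
      have : (fun j : Fin (m+1) => ([] : List α)[(j : ℕ)]?) = fun _ => none := by
        funext j; simp
      rw [this, List.ofFn_const, reduceOption_replicate_none]
    | cons x xs =>
      rw [List.ofFn_succ]
      simp only [Fin.val_zero, List.getElem?_cons_zero, Fin.val_succ,
        List.getElem?_cons_succ, List.reduceOption_cons_of_some]
      rw [ih xs (by simpa using hL)]

section Inv

variable {n ℓ : ℕ}

/-- Injectivity predicate for partial token placements. -/
def PInj (idx : Fin ℓ → Option (Fin k)) : Prop :=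
  ∀ w w' t, idx w = some t → idx w' = some t → w = w'

lemma PInj.move {idx : Fin ℓ → Option (Fin k)} (hinj : PInj idx) {s d : Fin ℓ} {t0 : Fin k}
    (hs : idx s = some t0) (hsd : s ≠ d) :
    PInj (fun w => if w = d then some t0 else if w = s then none else idx w) := by
  intro w w' t hw hw'
  simp only at hw hw'
  by_cases e1 : w = d
  · rw [if_pos e1] at hw
    by_cases e1' : w' = d
    · exact e1.trans e1'.symm
    · rw [if_neg e1'] at hw'
      by_cases e2' : w' = s
      · rw [if_pos e2'] at hw'; cases hw'
      · rw [if_neg e2'] at hw'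
        have ht : t0 = t := by injection hw
        rw [← ht] at hw'
        exact absurd (hinj w' s t0 hw' hs) e2'
  · rw [if_neg e1] at hw
    by_cases e2 : w = s
    · rw [if_pos e2] at hw; cases hw
    · rw [if_neg e2] at hw
      by_cases e1' : w' = d
      · rw [if_pos e1'] at hw'
        have ht : t0 = t := by injection hw'
        rw [← ht] at hw
        exact absurd (hinj w s t0 hw hs) e2
      · rw [if_neg e1'] at hw'
        by_cases e2' : w' = s
        · rw [if_pos e2'] at hw'; cases hw'
        · rw [if_neg e2'] at hw'
          exact hinj w w' t hw hw'

lemma PInj.swap {idx : Fin ℓ → Option (Fin k)} (hinj : PInj idx) {p q : Fin ℓ} {a b : Fin k}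
    (hp : idx p = some a) (hq : idx q = some b) :
    PInj (fun w => if w = p then some b else if w = q then some a else idx w) := by
  intro w w' t hw hw'
  simp only at hw hw'
  by_cases e1 : w = p <;> by_cases e1' : w' = p
  · exact e1.trans e1'.symm
  · rw [if_pos e1] at hw
    rw [if_neg e1'] at hw'
    have hbt : b = t := by injection hw
    by_cases e2' : w' = q
    · rw [if_pos e2'] at hw'
      have hat : a = t := by injection hw'
      have hab : a = b := hat.trans hbt.symm
      have epq : p = q := hinj p q a hp (by rw [hq, ← hab])
      rw [e1, e2', ← epq]
    · rw [if_neg e2'] at hw'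
      rw [← hbt] at hw'
      exact absurd (hinj w' q b hw' hq) e2'
  · rw [if_neg e1] at hw
    rw [if_pos e1'] at hw'
    have hbt : b = t := by injection hw'
    by_cases e2 : w = q
    · rw [if_pos e2] at hw
      have hat : a = t := by injection hw
      have hab : a = b := hat.trans hbt.symm
      have epq : p = q := hinj p q a hp (by rw [hq, ← hab])
      rw [e1', e2, ← epq]
    · rw [if_neg e2] at hw
      rw [← hbt] at hw
      exact absurd (hinj w q b hw hq) e2
  · rw [if_neg e1] at hw
    rw [if_neg e1'] at hw'
    by_cases e2 : w = q <;> by_cases e2' : w' = q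
    · exact e2.trans e2'.symm
    · rw [if_pos e2] at hw
      rw [if_neg e2'] at hw'
      have hat : a = t := by injection hw
      rw [← hat] at hw'
      exact absurd (hinj w' p a hw' hp) e1'
    · rw [if_neg e2] at hw
      rw [if_pos e2'] at hw'
      have hat : a = t := by injection hw'
      rw [← hat] at hw
      exact absurd (hinj w p a hw hp) e1
    · rw [if_neg e2] at hw
      rw [if_neg e2'] at hw'
      exact hinj w w' t hw hw'

def Inv (tok0 : Fin k → MM k) (yOf : (Fin n → Bool) → Fin k → Bool)
    (V : (Fin n → Bool) → Fin ℓ → Bool) : Prop :=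
  ∃ L : List (Fin k × Fin k), ∃ con : Fin ℓ → Bool, ∃ idx : Fin ℓ → Option (Fin k),
    (phi tok0 + L.length ≤ phi (tokRun tok0 L)) ∧ PInj idx ∧
    (∀ x w, V x w = (idx w).elim (con w) (fun a => tokRun tok0 L a (yOf x)))

lemma Inv.step {tok0 : Fin k → MM k} {yOf : (Fin n → Bool) → Fin k → Bool}
    {V : (Fin n → Bool) → Fin ℓ → Bool} (h : Inv tok0 yOf V)
    (g : Fin ℓ × Fin ℓ) (hg : g.1 ≠ g.2) :
    Inv tok0 yOf (fun x => CompCircuit.applyGate g (V x)) := by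
  obtain ⟨L, con, idx, hphi, hinj, hsem⟩ := h
  have hg' : ¬ (g.2 = g.1) := fun hh => hg hh.symm
  cases h1 : idx g.1 with
  | none =>
    cases h2 : idx g.2 with
    | none =>
      -- both wires constant
      refine ⟨L, fun w => if w = g.1 then con g.1 && con g.2
        else if w = g.2 then con g.1 || con g.2 else con w, idx, hphi, hinj, ?_⟩
      intro x w
      have e1 : V x g.1 = con g.1 := by rw [hsem x g.1, h1]; rfl
      have e2 : V x g.2 = con g.2 := by rw [hsem x g.2, h2]; rfl
      by_cases hw1 : w = g.1
      · subst hw1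
        simp [CompCircuit.applyGate, e1, e2, h1]
      · by_cases hw2 : w = g.2
        · subst hw2
          simp [CompCircuit.applyGate, e1, e2, h2, hw1]
        · simp only [CompCircuit.applyGate, if_neg hw1, if_neg hw2]
          rw [hsem x w]
    | some b =>
      -- g.1 constant c, g.2 token b
      cases hc : con g.1 with
      | true =>
        -- (c ∧ h, c ∨ h) = (h, 1) : token moves from g.2 to g.1
        refine ⟨L, fun w => if w = g.2 then true else con w,
          fun w => if w = g.1 then some b else if w = g.2 then none else idx w,
          hphi, by simpa using hinj.move h2 (Ne.symm hg), ?_⟩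
        intro x w
        have e1 : V x g.1 = true := by rw [hsem x g.1, h1]; exact hc
        have e2 : V x g.2 = tokRun tok0 L b (yOf x) := by rw [hsem x g.2, h2]; rfl
        by_cases hw1 : w = g.1
        · subst hw1
          simp [CompCircuit.applyGate, e1, e2, hg]
        · by_cases hw2 : w = g.2
          · subst hw2
            simp [CompCircuit.applyGate, e1, e2, hw1]
          · simp only [CompCircuit.applyGate, if_neg hw1, if_neg hw2]
            rw [hsem x w]
      | false =>
        -- (0, h) : token stays on g.2, g.1 becomes constant 0
        refine ⟨L, fun w => if w = g.1 then false else con w, idx, hphi, hinj, ?_⟩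
        intro x w
        have e1 : V x g.1 = false := by rw [hsem x g.1, h1]; exact hc
        by_cases hw1 : w = g.1
        · subst hw1
          simp [CompCircuit.applyGate, e1, h1]
        · by_cases hw2 : w = g.2
          · subst hw2
            simp only [CompCircuit.applyGate, if_neg hw1, if_pos rfl, e1, Bool.false_or, h2]
            rw [hsem x g.2, h2]
            simp [hw1]
          · simp only [CompCircuit.applyGate, if_neg hw1, if_neg hw2]
            rw [hsem x w]
  | some a =>
    cases h2 : idx g.2 with
    | none =>
      -- g.1 token a, g.2 constant c
      cases hc : con g.2 with
      | true =>
        -- (h ∧ 1, h ∨ 1) = (h, 1)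
        refine ⟨L, fun w => if w = g.2 then true else con w, idx, hphi, hinj, ?_⟩
        intro x w
        have e1 : V x g.1 = tokRun tok0 L a (yOf x) := by rw [hsem x g.1, h1]; rfl
        have e2 : V x g.2 = true := by rw [hsem x g.2, h2]; exact hc
        by_cases hw1 : w = g.1
        · subst hw1
          simp [CompCircuit.applyGate, e1, e2, h1, hg]
        · by_cases hw2 : w = g.2
          · subst hw2
            simp [CompCircuit.applyGate, e1, e2, h2, hw1]
          · simp only [CompCircuit.applyGate, if_neg hw1, if_neg hw2]
            rw [hsem x w]
      | false =>
        -- (h ∧ 0, h ∨ 0) = (0, h) : token moves from g.1 to g.2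
        refine ⟨L, fun w => if w = g.1 then false else con w,
          fun w => if w = g.2 then some a else if w = g.1 then none else idx w,
          hphi, by simpa using hinj.move h1 hg, ?_⟩
        intro x w
        have e1 : V x g.1 = tokRun tok0 L a (yOf x) := by rw [hsem x g.1, h1]; rfl
        have e2 : V x g.2 = false := by rw [hsem x g.2, h2]; exact hc
        by_cases hw1 : w = g.1
        · subst hw1
          simp [CompCircuit.applyGate, e1, e2, hg, hg']
        · by_cases hw2 : w = g.2
          · subst hw2
            simp [CompCircuit.applyGate, e1, e2, hw1]
          · simp only [CompCircuit.applyGate, if_neg hw1, if_neg hw2]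
            rw [hsem x w]
    | some b =>
      -- both tokens
      have hab : a ≠ b := by
        intro hab
        subst hab
        exact hg (hinj g.1 g.2 a h1 h2)
      have e1 : ∀ x, V x g.1 = tokRun tok0 L a (yOf x) := fun x => by rw [hsem x g.1, h1]; rfl
      have e2 : ∀ x, V x g.2 = tokRun tok0 L b (yOf x) := fun x => by rw [hsem x g.2, h2]; rfl
      by_cases hml : mle (tokRun tok0 L a) (tokRun tok0 L b)
      · -- gate is an identity
        refine ⟨L, con, idx, hphi, hinj, ?_⟩
        intro x w
        by_cases hw1 : w = g.1
        · subst hw1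
          have hma := congrFun (mand_eq_of_mle hml) (yOf x)
          simp only [mand] at hma
          simp [CompCircuit.applyGate, e1, e2, h1, hma]
        · by_cases hw2 : w = g.2
          · subst hw2
            have hmo := congrFun (mor_eq_of_mle hml) (yOf x)
            simp only [mor] at hmo
            simp [CompCircuit.applyGate, e1, e2, h2, hw1, hmo]
          · simp only [CompCircuit.applyGate, if_neg hw1, if_neg hw2]
            exact hsem x w
      · by_cases hml' : mle (tokRun tok0 L b) (tokRun tok0 L a)
        · -- gate is a swap
          refine ⟨L, con,
            fun w => if w = g.1 then some b else if w = g.2 then some a else idx w,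
            hphi, by simpa using hinj.swap h1 h2, ?_⟩
          intro x w
          by_cases hw1 : w = g.1
          · subst hw1
            have hma := congrFun (mand_eq_of_mle hml') (yOf x)
            simp only [mand] at hma
            rw [Bool.and_comm] at hma
            simp [CompCircuit.applyGate, e1, e2, hma]
          · by_cases hw2 : w = g.2
            · subst hw2
              have hmo := congrFun (mor_eq_of_mle hml') (yOf x)
              simp only [mor] at hmo
              rw [Bool.or_comm] at hmo
              simp [CompCircuit.applyGate, e1, e2, hw1, hmo]
            · simp only [CompCircuit.applyGate, if_neg hw1, if_neg hw2]
              rw [hsem x w]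
        · -- genuine merge: append the gate
          have hrw : tokRun tok0 (L ++ [(a, b)]) = tokStep (tokRun tok0 L) (a, b) := by
            rw [tokRun_append]; rfl
          refine ⟨L ++ [(a, b)], con, idx, ?_, hinj, ?_⟩
          · have hstep := phi_lt_tokStep (tokRun tok0 L) a b hab hml hml'
            rw [hrw]
            simp only [List.length_append, List.length_cons, List.length_nil]
            omega
          · intro x w
            by_cases hw1 : w = g.1
            · subst hw1
              simp [CompCircuit.applyGate, e1, e2, h1, hrw, tokStep, mand]
            · by_cases hw2 : w = g.2
              · subst hw2
                simp [CompCircuit.applyGate, e1, e2, h2, hw1, hrw, tokStep, hab.symm, mor]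
              · simp only [CompCircuit.applyGate, if_neg hw1, if_neg hw2]
                rw [hsem x w]
                cases h3 : idx w with
                | none => simp
                | some d =>
                  have hda : ¬ (d = a) := by
                    intro hd; subst hd
                    exact hw1 (hinj w g.1 d h3 h1)
                  have hdb : ¬ (d = b) := by
                    intro hd; subst hd
                    exact hw2 (hinj w g.2 d h3 h2)
                  simp only [Option.elim, hrw, tokStep, if_neg hda, if_neg hdb]

lemma Inv.foldl {tok0 : Fin k → MM k} {yOf : (Fin n → Bool) → Fin k → Bool} :
    ∀ (G : List (Fin ℓ × Fin ℓ)) (V : (Fin n → Bool) → Fin ℓ → Bool),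
      (∀ g ∈ G, g.1 ≠ g.2) → Inv tok0 yOf V →
      Inv tok0 yOf (fun x => G.foldl (fun v g => CompCircuit.applyGate g v) (V x)) := by
  intro G
  induction G with
  | nil => intro V _ h; simpa using h
  | cons g G ih =>
    intro V hdist h
    simp only [List.foldl_cons]
    exact ih (fun x => CompCircuit.applyGate g (V x))
      (fun g' hg' => hdist g' (List.mem_cons_of_mem g hg'))
      (h.step g (hdist g List.mem_cons_self))

end Inv

end CCaux

namespace CCaux

open CompCircuit

theorem block_bound {n ℓ : ℕ} (C : CompCircuit n ℓ) (B : Finset (Fin n)) :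
    {g : (Fin n → Bool) → Bool | ∃ ρ : Fin n → Bool,
        g = fun x => C.eval (fun j => if j ∈ B then x j else ρ j)}.ncard
      ≤ 2 + ((Finset.univ.filter fun w : Fin ℓ => (C.label w).1 ∈ B).card *
              (Finset.univ.filter fun w : Fin ℓ => (C.label w).1 ∈ B).card + 1) ^
            ((Finset.univ.filter fun w : Fin ℓ => (C.label w).1 ∈ B).card *
              (Finset.univ.filter fun w : Fin ℓ => (C.label w).1 ∈ B).card) *
          (Finset.univ.filter fun w : Fin ℓ => (C.label w).1 ∈ B).card := by
  classical
  set Wset : Finset (Fin ℓ) := Finset.univ.filter (fun w : Fin ℓ => (C.label w).1 ∈ B) with hWset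
  set k : ℕ := Wset.card with hk
  set E : {w // w ∈ Wset} ≃ Fin k := Wset.equivFin with hE
  set tok0 : Fin k → MM k :=
    fun t => fun y => if (C.label (E.symm t).1).2 then !(y t) else y t with htok0
  set yOf : (Fin n → Bool) → Fin k → Bool :=
    fun x t => x (C.label ((E.symm t) : Fin ℓ)).1 with hyOf
  set F : (Bool ⊕ ((Fin (k*k) → Option (Fin k × Fin k)) × Fin k)) → ((Fin n → Bool) → Bool) :=
    fun s => Sum.elim (fun c => fun _ => c)
      (fun vt => fun x => tokRun tok0 ((List.ofFn vt.1).reduceOption) vt.2 (yOf x)) s with hF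
  have hsub : {g : (Fin n → Bool) → Bool | ∃ ρ : Fin n → Bool,
      g = fun x => C.eval (fun j => if j ∈ B then x j else ρ j)} ⊆ Set.range F := by
    rintro g ⟨ρ, rfl⟩
    have hbase : Inv tok0 yOf (fun x => C.init (fun j => if j ∈ B then x j else ρ j)) := by
      refine ⟨[], fun w => litVal ρ (C.label w),
        fun w => if h : w ∈ Wset then some (E ⟨w, h⟩) else none, by simp, ?_, ?_⟩
      · intro w w' t hw hw'
        simp only at hw hw'
        by_cases m1 : w ∈ Wset
        · rw [dif_pos m1] at hw
          by_cases m2 : w' ∈ Wset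
          · rw [dif_pos m2] at hw'
            have h1 : E ⟨w, m1⟩ = t := by injection hw
            have h2 : E ⟨w', m2⟩ = t := by injection hw'
            have := E.injective (h1.trans h2.symm)
            exact congrArg Subtype.val this
          · rw [dif_neg m2] at hw'; cases hw'
        · rw [dif_neg m1] at hw; cases hw
      · intro x w
        show  _ = Option.elim (if h : w ∈ Wset then some (E ⟨w, h⟩) else none) _ _
        by_cases hm : w ∈ Wset
        · rw [dif_pos hm]
          have hBmem : (C.label w).1 ∈ B := (Finset.mem_filter.mp hm).2
          simp only [Option.elim, tokRun_nil, htok0, hyOf, Equiv.symm_apply_apply,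
            CompCircuit.init, CompCircuit.litVal]
          rw [if_pos hBmem]
        · rw [dif_neg hm]
          have hBmem : (C.label w).1 ∉ B := by
            intro hcon
            exact hm (Finset.mem_filter.mpr ⟨Finset.mem_univ w, hcon⟩)
          simp only [Option.elim, CompCircuit.init, CompCircuit.litVal]
          rw [if_neg hBmem]
    have hrun := Inv.foldl C.gates _ C.distinct hbase
    obtain ⟨L, con, idx, hphi, hinj, hsem⟩ := hrun
    have hL : L.length ≤ k * k := by
      have h1 := phi_le (tokRun tok0 L)
      omega
    have hevaleq : ∀ x, C.eval (fun j => if j ∈ B then x j else ρ j) =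
        (idx C.out).elim (con C.out) (fun a => tokRun tok0 L a (yOf x)) := by
      intro x
      exact hsem x C.out
    cases h3 : idx C.out with
    | none =>
      refine ⟨Sum.inl (con C.out), ?_⟩
      funext x
      simp only [hF, Sum.elim_inl]
      rw [hevaleq x, h3]
      rfl
    | some a =>
      refine ⟨Sum.inr (fun j : Fin (k*k) => L[(j : ℕ)]?, a), ?_⟩
      funext x
      simp only [hF, Sum.elim_inr]
      rw [reduceOption_ofFn_getElem? (k*k) L hL]
      rw [hevaleq x, h3]
      rfl
  calc {g : (Fin n → Bool) → Bool | ∃ ρ : Fin n → Bool,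
        g = fun x => C.eval (fun j => if j ∈ B then x j else ρ j)}.ncard
      ≤ (Set.range F).ncard := Set.ncard_le_ncard hsub (Set.finite_range F)
    _ ≤ (Set.univ : Set (Bool ⊕ ((Fin (k*k) → Option (Fin k × Fin k)) × Fin k))).ncard := by
        rw [← Set.image_univ]
        exact Set.ncard_image_le Set.finite_univ
    _ = 2 + (k*k+1)^(k*k) * k := by
        rw [Set.ncard_univ, Nat.card_eq_fintype_card]
        simp [Fintype.card_fun]

end CCaux

namespace CCaux

lemma endgame (ε : ℝ) (hε0 : 0 < ε) (hε1 : ε < 1) :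
    ∃ N : ℕ, 2 ≤ N ∧ ∀ n : ℕ, N ≤ n → ∀ k : ℕ,
      (k : ℝ) ≤ (n : ℝ) ^ ((1:ℝ)/2 - 2*ε/3) →
      ((2 + (k*k+1)^(k*k)*k : ℕ) : ℝ) ≤ (2:ℝ) ^ ((n : ℝ) ^ (1 - ε/2)) := by
  set γ := min (5*ε/6) (1/2 : ℝ) with hγ
  have hγ0 : 0 < γ := lt_min (by linarith) (by norm_num)
  have hγ1 : γ ≤ 1 := le_trans (min_le_right _ _) (by norm_num)
  have hlo := isLittleO_log_rpow_atTop hγ0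
  have hev := hlo.def (c := Real.log 2 / 6) (by positivity)
  obtain ⟨x₀, hx₀⟩ := Filter.eventually_atTop.mp hev
  refine ⟨max 2 ⌈x₀⌉₊, le_max_left _ _, ?_⟩
  intro n hn k hk
  have hn2 : 2 ≤ n := le_trans (le_max_left _ _) hn
  have hnx : x₀ ≤ (n : ℝ) := by
    calc x₀ ≤ (⌈x₀⌉₊ : ℝ) := Nat.le_ceil x₀
    _ ≤ (n : ℝ) := by exact_mod_cast le_trans (le_max_right 2 _) hn
  have hn0 : (0:ℝ) < n := by exact_mod_cast (by omega : 0 < n)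
  have hn1 : (1:ℝ) ≤ n := by exact_mod_cast (by omega : 1 ≤ n)
  -- the logarithmic bound : 3 * logb 2 (n+2) ≤ n ^ γ
  have hlog : 3 * Real.logb 2 ((n:ℝ) + 2) ≤ (n:ℝ) ^ γ := by
    have h1 := hx₀ ((n:ℝ) + 2) (by linarith)
    rw [Real.norm_eq_abs, Real.norm_eq_abs] at h1
    have hpos1 : (0:ℝ) ≤ Real.log ((n:ℝ) + 2) := Real.log_nonneg (by linarith)
    have hpos2 : (0:ℝ) ≤ ((n:ℝ) + 2) ^ γ := Real.rpow_nonneg (by linarith) _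
    rw [abs_of_nonneg hpos1, abs_of_nonneg hpos2] at h1
    have hlog2 : (0:ℝ) < Real.log 2 := Real.log_pos (by norm_num)
    have h2 : ((n:ℝ) + 2) ^ γ ≤ 2 * (n:ℝ) ^ γ := by
      have hn2' : (2:ℝ) ≤ (n:ℝ) := by exact_mod_cast hn2
      have ha : ((n:ℝ) + 2) ^ γ ≤ (2 * (n:ℝ)) ^ γ :=
        Real.rpow_le_rpow (by linarith) (by linarith) (le_of_lt hγ0)
      have hb : (2 * (n:ℝ)) ^ γ = 2 ^ γ * (n:ℝ) ^ γ :=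
        Real.mul_rpow (by norm_num) (le_of_lt hn0)
      have hc : (2:ℝ) ^ γ ≤ 2 ^ (1:ℝ) :=
        Real.rpow_le_rpow_of_exponent_le (by norm_num) hγ1
      have hd : (2:ℝ) ^ (1:ℝ) = 2 := Real.rpow_one 2
      have he : (0:ℝ) ≤ (n:ℝ) ^ γ := Real.rpow_nonneg (le_of_lt hn0) _
      calc ((n:ℝ) + 2) ^ γ ≤ (2 * (n:ℝ)) ^ γ := ha
        _ = 2 ^ γ * (n:ℝ) ^ γ := hb
        _ ≤ 2 * (n:ℝ) ^ γ := by nlinarith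
    rw [Real.logb]
    calc 3 * (Real.log ((n:ℝ)+2) / Real.log 2) = (Real.log ((n:ℝ)+2)) * (3 / Real.log 2) := by ring
      _ ≤ (Real.log 2 / 6 * ((n:ℝ) + 2) ^ γ) * (3 / Real.log 2) := by
          apply mul_le_mul_of_nonneg_right h1
          positivity
      _ = ((n:ℝ) + 2) ^ γ / 2 := by field_simp; ring
      _ ≤ (n:ℝ) ^ γ := by linarith
  -- bounds on k
  set m₀ := max (1 - 4*ε/3) (0:ℝ) with hm₀
  have hm₀0 : 0 ≤ m₀ := le_max_right _ _
  have hm₀1 : m₀ ≤ 1 := by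
    apply max_le _ (by norm_num)
    linarith
  have hkk : ((k*k : ℕ) : ℝ) ≤ (n:ℝ) ^ m₀ := by
    push_cast
    have h1 : (k:ℝ) * k ≤ (n:ℝ) ^ ((1:ℝ)/2 - 2*ε/3) * (n:ℝ) ^ ((1:ℝ)/2 - 2*ε/3) := by
      have hk0 : (0:ℝ) ≤ k := Nat.cast_nonneg k
      exact mul_le_mul hk hk hk0 (Real.rpow_nonneg (le_of_lt hn0) _)
    have h2 : (n:ℝ) ^ ((1:ℝ)/2 - 2*ε/3) * (n:ℝ) ^ ((1:ℝ)/2 - 2*ε/3)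
        = (n:ℝ) ^ (1 - 4*ε/3) := by
      rw [← Real.rpow_add hn0]
      norm_num
      ring_nf
    have h3 : (n:ℝ) ^ (1 - 4*ε/3) ≤ (n:ℝ) ^ m₀ :=
      Real.rpow_le_rpow_of_exponent_le hn1 (le_max_left _ _)
    calc (k:ℝ) * k ≤ _ := h1
      _ = _ := h2
      _ ≤ _ := h3
  have hnm0_le_n : (n:ℝ) ^ m₀ ≤ (n:ℝ) := by
    calc (n:ℝ) ^ m₀ ≤ (n:ℝ) ^ (1:ℝ) := Real.rpow_le_rpow_of_exponent_le hn1 hm₀1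
    _ = n := Real.rpow_one _
  have hkkn : k * k ≤ n := by
    have : ((k*k : ℕ) : ℝ) ≤ (n:ℝ) := le_trans hkk hnm0_le_n
    exact_mod_cast this
  have hkn : k ≤ n := by nlinarith [hkkn]
  -- natural-number step: 2 + (k*k+1)^(k*k)*k ≤ (n+2)^(k*k+2)
  have hnat : (2 + (k*k+1)^(k*k)*k : ℕ) ≤ (n+2)^(k*k+2) := by
    have hbase : k*k+1 ≤ n+2 := by omega
    have h1 : (k*k+1)^(k*k) ≤ (n+2)^(k*k) := Nat.pow_le_pow_left hbase _
    have h2 : (k*k+1)^(k*k)*k ≤ (n+2)^(k*k) * (n+2) := Nat.mul_le_mul h1 (by omega)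
    have h3 : (n+2)^(k*k) * (n+2) = (n+2)^(k*k+1) := by ring
    have h4 : 2 ≤ (n+2)^(k*k+1) := by
      calc 2 ≤ n+2 := by omega
      _ ≤ (n+2)^(k*k+1) := Nat.le_self_pow (by omega) _
    calc 2 + (k*k+1)^(k*k)*k ≤ (n+2)^(k*k+1) + (n+2)^(k*k+1) := by omega
      _ = 2 * (n+2)^(k*k+1) := by ring
      _ ≤ (n+2) * (n+2)^(k*k+1) := Nat.mul_le_mul_right _ (by omega)
      _ = (n+2)^(k*k+2) := by ring
  -- real step : ((n+2) : ℝ)^(k*k+2) ≤ 2 ^ (n ^ (1 - ε/2))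
  have hX1 : (1:ℝ) < (n:ℝ) + 2 := by linarith
  have hX0 : (0:ℝ) < (n:ℝ) + 2 := by linarith
  have hreal : (((n+2)^(k*k+2) : ℕ) : ℝ) ≤ (2:ℝ) ^ ((n:ℝ) ^ (1 - ε/2)) := by
    push_cast
    have hrw : ((n:ℝ)+2) ^ ((k*k+2 : ℕ) : ℝ) = (2:ℝ) ^ (Real.logb 2 ((n:ℝ)+2) * ((k*k+2 : ℕ) : ℝ)) := by
      conv_lhs => rw [← Real.rpow_logb (by norm_num : (0:ℝ) < 2) (by norm_num) hX0]
      rw [← Real.rpow_mul (by norm_num : (0:ℝ) ≤ 2)]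
    have hexp : Real.logb 2 ((n:ℝ)+2) * ((k*k+2 : ℕ) : ℝ) ≤ (n:ℝ) ^ (1 - ε/2) := by
      have hlogb0 : 0 ≤ Real.logb 2 ((n:ℝ)+2) := Real.logb_nonneg (by norm_num) (by linarith)
      have hE : ((k*k+2 : ℕ) : ℝ) ≤ 3 * (n:ℝ) ^ m₀ := by
        push_cast
        have h1 : (1:ℝ) ≤ (n:ℝ) ^ m₀ := Real.one_le_rpow hn1 hm₀0
        push_cast at hkk
        linarith
      have step1 : Real.logb 2 ((n:ℝ)+2) * ((k*k+2 : ℕ) : ℝ)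
          ≤ Real.logb 2 ((n:ℝ)+2) * (3 * (n:ℝ) ^ m₀) :=
        mul_le_mul_of_nonneg_left hE hlogb0
      have step2 : Real.logb 2 ((n:ℝ)+2) * (3 * (n:ℝ) ^ m₀)
          = (3 * Real.logb 2 ((n:ℝ)+2)) * (n:ℝ) ^ m₀ := by ring
      have hnm0 : (0:ℝ) ≤ (n:ℝ) ^ m₀ := Real.rpow_nonneg (le_of_lt hn0) _
      have step3 : (3 * Real.logb 2 ((n:ℝ)+2)) * (n:ℝ) ^ m₀ ≤ (n:ℝ) ^ γ * (n:ℝ) ^ m₀ :=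
        mul_le_mul_of_nonneg_right hlog hnm0
      have step4 : (n:ℝ) ^ γ * (n:ℝ) ^ m₀ = (n:ℝ) ^ (γ + m₀) := (Real.rpow_add hn0 _ _).symm
      have step5 : (n:ℝ) ^ (γ + m₀) ≤ (n:ℝ) ^ (1 - ε/2) := by
        apply Real.rpow_le_rpow_of_exponent_le hn1
        rcases le_or_gt 0 (1 - 4*ε/3) with hc | hc
        · have : m₀ = 1 - 4*ε/3 := max_eq_left hc
          rw [this]
          have : γ ≤ 5*ε/6 := min_le_left _ _
          linarith
        · have : m₀ = 0 := max_eq_right (le_of_lt hc)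
          rw [this]
          have : γ ≤ 1/2 := min_le_right _ _
          linarith
      calc Real.logb 2 ((n:ℝ)+2) * ((k*k+2 : ℕ) : ℝ) ≤ _ := step1
        _ = _ := step2
        _ ≤ _ := step3
        _ = _ := step4
        _ ≤ _ := step5
    calc ((n:ℝ)+2) ^ ((k*k+2 : ℕ)) = ((n:ℝ)+2) ^ ((k*k+2 : ℕ) : ℝ) :=
          (Real.rpow_natCast _ _).symm
      _ = (2:ℝ) ^ (Real.logb 2 ((n:ℝ)+2) * ((k*k+2 : ℕ) : ℝ)) := hrw
      _ ≤ (2:ℝ) ^ ((n:ℝ) ^ (1 - ε/2)) := Real.rpow_le_rpow_of_exponent_le one_le_two hexp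
  calc ((2 + (k*k+1)^(k*k)*k : ℕ) : ℝ) ≤ (((n+2)^(k*k+2) : ℕ) : ℝ) := by exact_mod_cast hnat
    _ ≤ (2:ℝ) ^ ((n:ℝ) ^ (1 - ε/2)) := hreal

end CCaux


open Finset

/-- For every `ε ∈ (0,1)` there is `N(ε)` such that for every `n ≥ N`,
`δ = ε/3`, and every partition of `[n]` into `m = ⌈n^(1−δ)⌉` blocks each of size at most
`⌈n^δ⌉`, every comparator circuit `C` on `n` variables with at most `n^(1.5−ε)` wires has a
block `S_i` such that the number of distinct restricted functions `C|ρ`, over assignments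
`ρ` to the variables outside `S_i`, is at most `2^(n^(1−ε/2))`. -/
theorem few_restrictions_some_block (ε : ℝ) (hε0 : 0 < ε) (hε1 : ε < 1) :
    ∃ N : ℕ, ∀ n : ℕ, N ≤ n →
      ∀ S : Fin (⌈(n : ℝ) ^ (1 - ε / 3)⌉₊) → Finset (Fin n),
        (∀ i j, i ≠ j → Disjoint (S i) (S j)) →
        (∀ v : Fin n, ∃ i, v ∈ S i) →
        (∀ i, (S i).card ≤ ⌈(n : ℝ) ^ (ε / 3)⌉₊) →
        ∀ ℓ : ℕ, ∀ C : CompCircuit n ℓ, (ℓ : ℝ) ≤ (n : ℝ) ^ ((1.5 : ℝ) - ε) →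
          ∃ i, ({g : (Fin n → Bool) → Bool | ∃ ρ : Fin n → Bool,
                g = fun x => C.eval (fun j => if j ∈ S i then x j else ρ j)}.ncard : ℝ)
            ≤ (2 : ℝ) ^ ((n : ℝ) ^ (1 - ε / 2)) := by
  classical
  obtain ⟨N, hN2, hNbound⟩ := CCaux.endgame ε hε0 hε1
  refine ⟨N, ?_⟩
  intro n hn
  set m : ℕ := ⌈(n : ℝ) ^ (1 - ε / 3)⌉₊ with hm
  intro S hdisj hcover hsize ℓ C hℓ
  have hn2 : 2 ≤ n := le_trans hN2 hn
  have hn0 : (0:ℝ) < n := by exact_mod_cast (by omega : 0 < n)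
  have hm1 : 0 < m := Nat.ceil_pos.mpr (Real.rpow_pos_of_pos hn0 _)
  set kfun : Fin m → ℕ :=
    fun i => (Finset.univ.filter fun w : Fin ℓ => (C.label w).1 ∈ S i).card with hkfun
  have huniv : (Finset.univ : Finset (Fin m)).Nonempty := ⟨⟨0, hm1⟩, Finset.mem_univ _⟩
  obtain ⟨i₀, -, hmin⟩ := Finset.exists_min_image Finset.univ kfun huniv
  refine ⟨i₀, ?_⟩
  set k : ℕ := kfun i₀ with hkdef
  -- double counting: ∑ i, kfun i ≤ ℓ
  have hsum : (∑ i : Fin m, kfun i) ≤ ℓ := by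
    have h1 : ∀ i : Fin m, kfun i = ∑ w : Fin ℓ, if (C.label w).1 ∈ S i then 1 else 0 :=
      fun i => Finset.card_filter _ _
    have h2 : (∑ i : Fin m, kfun i)
        = ∑ w : Fin ℓ, ∑ i : Fin m, if (C.label w).1 ∈ S i then 1 else 0 := by
      calc (∑ i : Fin m, kfun i)
          = ∑ i : Fin m, ∑ w : Fin ℓ, if (C.label w).1 ∈ S i then 1 else 0 :=
            Finset.sum_congr rfl fun i _ => h1 i
        _ = ∑ w : Fin ℓ, ∑ i : Fin m, if (C.label w).1 ∈ S i then 1 else 0 :=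
            Finset.sum_comm
    rw [h2]
    have h3 : ∀ w : Fin ℓ, (∑ i : Fin m, if (C.label w).1 ∈ S i then 1 else 0) ≤ 1 := by
      intro w
      rw [← Finset.card_filter]
      apply Finset.card_le_one.mpr
      intro a ha b hb
      by_contra hne
      exact Finset.disjoint_left.mp (hdisj a b hne)
        (Finset.mem_filter.mp ha).2 (Finset.mem_filter.mp hb).2
    calc (∑ w : Fin ℓ, ∑ i : Fin m, if (C.label w).1 ∈ S i then 1 else 0)
        ≤ ∑ _w : Fin ℓ, 1 := Finset.sum_le_sum fun w _ => h3 w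
      _ = ℓ := by simp
  have hmk : m * k ≤ ℓ := by
    have h1 : (∑ _i : Fin m, k) ≤ ∑ i : Fin m, kfun i :=
      Finset.sum_le_sum fun i _ => hmin i (Finset.mem_univ i)
    have h2 : (∑ _i : Fin m, k) = m * k := by
      rw [Finset.sum_const, Finset.card_univ, Fintype.card_fin, smul_eq_mul]
    calc m * k = ∑ _i : Fin m, k := h2.symm
      _ ≤ ∑ i : Fin m, kfun i := h1
      _ ≤ ℓ := hsum
  -- real bound on k
  have hkR : (k : ℝ) ≤ (n : ℝ) ^ ((1:ℝ)/2 - 2*ε/3) := by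
    have hmR : ((n:ℝ) ^ (1 - ε/3)) ≤ (m:ℝ) := Nat.le_ceil _
    have hmkR : (m:ℝ) * (k:ℝ) ≤ (ℓ:ℝ) := by exact_mod_cast hmk
    have hA0 : (0:ℝ) < (n:ℝ) ^ (1 - ε/3) := Real.rpow_pos_of_pos hn0 _
    have hsplit : (n:ℝ) ^ ((1.5:ℝ) - ε) = (n:ℝ) ^ (1 - ε/3) * (n:ℝ) ^ ((1:ℝ)/2 - 2*ε/3) := by
      rw [← Real.rpow_add hn0]
      norm_num
      ring_nf
    have hk0 : (0:ℝ) ≤ (k:ℝ) := Nat.cast_nonneg k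
    have hchain : (k:ℝ) * (n:ℝ) ^ (1 - ε/3)
        ≤ (n:ℝ) ^ ((1:ℝ)/2 - 2*ε/3) * (n:ℝ) ^ (1 - ε/3) := by
      calc (k:ℝ) * (n:ℝ) ^ (1 - ε/3) ≤ (k:ℝ) * (m:ℝ) :=
            mul_le_mul_of_nonneg_left hmR hk0
        _ = (m:ℝ) * (k:ℝ) := mul_comm _ _
        _ ≤ (ℓ:ℝ) := hmkR
        _ ≤ (n:ℝ) ^ ((1.5:ℝ) - ε) := hℓ
        _ = (n:ℝ) ^ (1 - ε/3) * (n:ℝ) ^ ((1:ℝ)/2 - 2*ε/3) := hsplit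
        _ = (n:ℝ) ^ ((1:ℝ)/2 - 2*ε/3) * (n:ℝ) ^ (1 - ε/3) := mul_comm _ _
    exact le_of_mul_le_mul_right hchain hA0
  have hb := CCaux.block_bound C (S i₀)
  have hend := hNbound n hn k hkR
  calc ({g : (Fin n → Bool) → Bool | ∃ ρ : Fin n → Bool,
          g = fun x => C.eval (fun j => if j ∈ S i₀ then x j else ρ j)}.ncard : ℝ)
      ≤ ((2 + (k*k+1)^(k*k)*k : ℕ) : ℝ) := by exact_mod_cast hb
    _ ≤ (2 : ℝ) ^ ((n : ℝ) ^ (1 - ε / 2)) := hend
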